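/- Let k ≥ 1 and let τ, τ' ∈ Types_k be such that τ ⪯ τ'. Then for every finite word w with tp_k(w) = τ, there exists a finite word w' such that tp_k(w·w') = τ'. -/

import Mathlib

set_option maxHeartbeats 1000000

namespace PrefSynth

/-! ### Possibly infinite words -/

/-- A (finite or infinite) word over alphabet `A`: positions carrying `some` letter. -/
abbrev Word (A : Type) : Type := ℕ → Option A

/-- `m` is a position of the word `w`. -/
def Word.pos {A : Type} (w : Word A) (m : ℕ) : Prop := w m ≠ none

/-- A genuine word: its domain is downward closed. -/
def Word.Closed {A : Type} (w : Word A) : Prop :=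
  ∀ i j : ℕ, i ≤ j → w j ≠ none → w i ≠ none

/-- The finite word given by a list. -/
def Word.ofList {A : Type} (l : List A) : Word A := fun i => l[i]?

/-- The infinite word given by a function. -/
def Word.ofFun {A : Type} (u : ℕ → A) : Word A := fun i => some (u i)

/-- The prefix of a word consisting of its first `n` positions; `Word.take w (m+1)`
is `w[0…m]`. -/
def Word.take {A : Type} (w : Word A) (n : ℕ) : Word A :=
  fun i => if i < n then w i else none

/-- `u` is a prefix of `v`. -/
def Word.IsPrefix {A : Type} (u v : Word A) : Prop :=
  ∀ i, u i ≠ none → v i = u i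

/-! ### Prefix first-order logic on words

Formulas in context `n`: the free variables are `Fin n`; when `n ≥ 1`, the variable
`0` is the bounding variable `x̄`, all other variables are prefix variables, and
every quantifier is of the form `∃ x < x̄` (new variables are appended at the end,
i.e. interpreted through `Fin.snoc`). -/

inductive PFm (A : Type) : ℕ → Type where
  | eq {n} : Fin n → Fin n → PFm A n
  | lt {n} : Fin n → Fin n → PFm A n
  | letter {n} : A → Fin n → PFm A n
  | and {n} : PFm A n → PFm A n → PFm A n
  | not {n} : PFm A n → PFm A n
  | exlt {n} : PFm A (n + 2) → PFm A (n + 1)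

/-- Quantifier depth. -/
def PFm.depth {A : Type} : {n : ℕ} → PFm A n → ℕ
  | _, .eq _ _ => 0
  | _, .lt _ _ => 0
  | _, .letter _ _ => 0
  | _, .and φ ψ => max φ.depth ψ.depth
  | _, .not φ => φ.depth
  | _, .exlt φ => φ.depth + 1

/-- Satisfaction of a prefFO formula in a word, under an assignment of the
free variables to positions. -/
def PFm.Sat {A : Type} (w : Word A) : {n : ℕ} → PFm A n → (Fin n → ℕ) → Prop
  | _, .eq i j, ρ => ρ i = ρ j
  | _, .lt i j, ρ => ρ i < ρ j
  | _, .letter a i, ρ => w (ρ i) = some a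
  | _, .and φ ψ, ρ => PFm.Sat w φ ρ ∧ PFm.Sat w ψ ρ
  | _, .not φ, ρ => ¬ PFm.Sat w φ ρ
  | _, .exlt φ, ρ => ∃ m : ℕ, Word.pos w m ∧ m < ρ 0 ∧ PFm.Sat w φ (Fin.snoc ρ m)

/-- prefFO sentences: start by quantifying the bounding variable, and are closed
under boolean combinations. -/
inductive PSen (A : Type) : Type where
  | exB : PFm A 1 → PSen A
  | and : PSen A → PSen A → PSen A
  | not : PSen A → PSen A

/-- Quantifier depth of a sentence. -/
def PSen.depth {A : Type} : PSen A → ℕ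
  | .exB φ => φ.depth + 1
  | .and s t => max s.depth t.depth
  | .not s => s.depth

/-- Satisfaction of a prefFO sentence in a word. -/
def PSen.Sat {A : Type} (w : Word A) : PSen A → Prop
  | .exB φ => ∃ m : ℕ, Word.pos w m ∧ PFm.Sat w φ (fun _ => m)
  | .and s t => PSen.Sat w s ∧ PSen.Sat w t
  | .not s => ¬ PSen.Sat w s

/-- The prefFO `k`-type of a word: the set of prefFO sentences of quantifier
depth at most `k` it satisfies. -/
def tp {A : Type} (k : ℕ) (w : Word A) : Set (PSen A) :=
  {s | PSen.depth s ≤ k ∧ PSen.Sat w s}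

/-- `Types_k`: the set of prefFO `k`-types of finite words over `A`. -/
def WTypes (A : Type) (k : ℕ) : Set (Set (PSen A)) :=
  {T | ∃ l : List A, T = tp k (Word.ofList l)}

/-- The relation `⪯` on types: `τ ⪯ τ'` iff some finite word of type `τ` has an
extension of type `τ'`. -/
def typeLe {A : Type} (k : ℕ) (τ τ' : Set (PSen A)) : Prop :=
  ∃ u v : List A, tp k (Word.ofList u) = τ ∧ tp k (Word.ofList (u ++ v)) = τ'

/-- Two words agree on all prefFO sentences of quantifier depth at most `k`. -/
def prefEquiv {A : Type} (k : ℕ) (w w' : Word A) : Prop :=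
  ∀ s : PSen A, PSen.depth s ≤ k → (PSen.Sat w s ↔ PSen.Sat w' s)

/-! ### Full first-order logic on words -/

inductive FOFm (A : Type) : ℕ → Type where
  | eq {n} : Fin n → Fin n → FOFm A n
  | lt {n} : Fin n → Fin n → FOFm A n
  | letter {n} : A → Fin n → FOFm A n
  | and {n} : FOFm A n → FOFm A n → FOFm A n
  | not {n} : FOFm A n → FOFm A n
  | ex {n} : FOFm A (n + 1) → FOFm A n

def FOFm.depth {A : Type} : {n : ℕ} → FOFm A n → ℕ
  | _, .eq _ _ => 0
  | _, .lt _ _ => 0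
  | _, .letter _ _ => 0
  | _, .and φ ψ => max φ.depth ψ.depth
  | _, .not φ => φ.depth
  | _, .ex φ => φ.depth + 1

def FOFm.Sat {A : Type} (w : Word A) : {n : ℕ} → FOFm A n → (Fin n → ℕ) → Prop
  | _, .eq i j, ρ => ρ i = ρ j
  | _, .lt i j, ρ => ρ i < ρ j
  | _, .letter a i, ρ => w (ρ i) = some a
  | _, .and φ ψ, ρ => FOFm.Sat w φ ρ ∧ FOFm.Sat w ψ ρ
  | _, .not φ, ρ => ¬ FOFm.Sat w φ ρ
  | _, .ex φ, ρ => ∃ m : ℕ, Word.pos w m ∧ FOFm.Sat w φ (Fin.snoc ρ m)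

/-- Two words agree on all FO sentences of quantifier depth at most `k`. -/
def foEquiv {A : Type} (k : ℕ) (w w' : Word A) : Prop :=
  ∀ s : FOFm A 0, FOFm.depth s ≤ k →
    (FOFm.Sat w s Fin.elim0 ↔ FOFm.Sat w' s Fin.elim0)

/-! ### The prefix Ehrenfeucht–Fraïssé game on words

After the first (bounding) round, pebbles are kept as matched pairs of
positions: `(m, m')` with `m` in the first word and `m'` in the second. -/

/-- The agreement condition: the correspondence between pebbled positions
preserves equality, the order `<` and the letters. -/
def AgreeW {A : Type} (u v : Word A) (L : List (ℕ × ℕ)) : Prop :=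
  ∀ p ∈ L, ∀ q ∈ L,
    ((p.1 = q.1) ↔ (p.2 = q.2)) ∧ ((p.1 < q.1) ↔ (p.2 < q.2)) ∧
    (∀ a : A, u p.1 = some a ↔ v p.2 = some a)

/-- `DupWinW u v b b' r L`: with bounding pebbles placed on `b` (in `u`) and `b'`
(in `v`), and prefix pebbles `L` already placed, Duplicator wins the game with `r`
remaining rounds. -/
def DupWinW {A : Type} (u v : Word A) (b b' : ℕ) : ℕ → List (ℕ × ℕ) → Prop
  | 0, L => AgreeW u v ((b, b') :: L)
  | r + 1, L => AgreeW u v ((b, b') :: L) ∧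
      (∀ m, Word.pos u m → m < b →
        ∃ m', Word.pos v m' ∧ m' < b' ∧ DupWinW u v b b' r ((m, m') :: L)) ∧
      (∀ m', Word.pos v m' → m' < b' →
        ∃ m, Word.pos u m ∧ m < b ∧ DupWinW u v b b' r ((m, m') :: L))

/-! ### Data words -/

/-- A move of a data word: a System action together with a System process, or an
Environment action together with an Environment process. `A`, `B` are the System
and Environment alphabets; `P`, `Q` the System and Environment process sets. -/
abbrev DMove (A B P Q : Type) : Type := (A × P) ⊕ (B × Q)

/-- The process of a move. -/
def dproc {A B P Q : Type} : DMove A B P Q → P ⊕ Q :=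
  Sum.elim (fun ap => Sum.inl ap.2) (fun bq => Sum.inr bq.2)

/-- The action of a move. -/
def dact {A B P Q : Type} : DMove A B P Q → A ⊕ B :=
  Sum.elim (fun ap => Sum.inl ap.1) (fun bq => Sum.inr bq.1)

/-- The process acting at position `m` of a data word. -/
def procAt {A B P Q : Type} (d : Word (DMove A B P Q)) (m : ℕ) : Option (P ⊕ Q) :=
  (d m).map dproc

/-- The action taken at position `m` of a data word. -/
def actAt {A B P Q : Type} (d : Word (DMove A B P Q)) (m : ℕ) : Option (A ⊕ B) :=
  (d m).map dact

/-- Elements of the structure associated with a data word: one process element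
for every process, and one element for every position. -/
abbrev Elem (P Q : Type) : Type := (P ⊕ Q) ⊕ ℕ

/-- The `∼`-class (i.e. the process) of an element of a data word. -/
def classOfE {A B P Q : Type} (d : Word (DMove A B P Q)) : Elem P Q → Option (P ⊕ Q)
  | .inl q => some q
  | .inr m => procAt d m

/-! ### Prefix first-order logic on data words

`PDW A B p b x` : formulas in a context with `p` process variables, `b` bounding
variables and `x` prefix variables.  Sentences (possibly with constants, constants
being modelled as the initial free variables) are obtained by instantiating the
contexts. -/

/-- A variable of any of the three kinds. -/
abbrev DVar (p b x : ℕ) : Type := Fin p ⊕ (Fin b ⊕ Fin x)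

inductive PDW (A B : Type) : ℕ → ℕ → ℕ → Type where
  | eq {p b x} : DVar p b x → DVar p b x → PDW A B p b x
  | procS {p b x} : Fin p → PDW A B p b x
  | procE {p b x} : Fin p → PDW A B p b x
  | letter {p b x} : (A ⊕ B) → (Fin b ⊕ Fin x) → PDW A B p b x
  | lesim {p b x} : Fin x → Fin x → PDW A B p b x
  | sim {p b x} : Fin p → DVar p b x → PDW A B p b x
  | and {p b x} : PDW A B p b x → PDW A B p b x → PDW A B p b x
  | not {p b x} : PDW A B p b x → PDW A B p b x
  | exP {p b x} : PDW A B (p + 1) b x → PDW A B p b x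
  | exB {p b x} : PDW A B p (b + 1) x → PDW A B p b x
  | exX {p b x} : Fin b → PDW A B p b (x + 1) → PDW A B p b x

/-- Quantifier depth. -/
def PDW.depth {A B : Type} : {p b x : ℕ} → PDW A B p b x → ℕ
  | _, _, _, .eq _ _ => 0
  | _, _, _, .procS _ => 0
  | _, _, _, .procE _ => 0
  | _, _, _, .letter _ _ => 0
  | _, _, _, .lesim _ _ => 0
  | _, _, _, .sim _ _ => 0
  | _, _, _, .and φ ψ => max φ.depth ψ.depth
  | _, _, _, .not φ => φ.depth
  | _, _, _, .exP φ => φ.depth + 1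
  | _, _, _, .exB φ => φ.depth + 1
  | _, _, _, .exX _ φ => φ.depth + 1

/-- Interpretation of a variable as an element of the data-word structure. -/
def interpDVar {P Q : Type} {p b x : ℕ} (ρP : Fin p → P ⊕ Q) (ρB : Fin b → ℕ)
    (ρX : Fin x → ℕ) : DVar p b x → Elem P Q
  | .inl i => Sum.inl (ρP i)
  | .inr (.inl i) => Sum.inr (ρB i)
  | .inr (.inr i) => Sum.inr (ρX i)

/-- Satisfaction of a prefFO^dw formula in a data word, under assignments of the
process, bounding and prefix variables.  New bounding variables must be positions
lying in a fresh class (w.r.t. all present bounding variables), new prefix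
variables must be `≲` their associated bounding variable. -/
def PDW.Sat {A B P Q : Type} (d : Word (DMove A B P Q)) :
    {p b x : ℕ} → PDW A B p b x → (Fin p → P ⊕ Q) → (Fin b → ℕ) → (Fin x → ℕ) → Prop
  | _, _, _, .eq v w, ρP, ρB, ρX => interpDVar ρP ρB ρX v = interpDVar ρP ρB ρX w
  | _, _, _, .procS i, ρP, _, _ => ∃ q : P, ρP i = Sum.inl q
  | _, _, _, .procE i, ρP, _, _ => ∃ q : Q, ρP i = Sum.inr q
  | _, _, _, .letter a v, _, ρB, ρX => actAt d (Sum.elim ρB ρX v) = some a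
  | _, _, _, .lesim i j, _, _, ρX =>
      ρX i < ρX j ∧ ∃ q, procAt d (ρX i) = some q ∧ procAt d (ρX j) = some q
  | _, _, _, .sim i v, ρP, ρB, ρX => classOfE d (interpDVar ρP ρB ρX v) = some (ρP i)
  | _, _, _, .and φ ψ, ρP, ρB, ρX => PDW.Sat d φ ρP ρB ρX ∧ PDW.Sat d ψ ρP ρB ρX
  | _, _, _, .not φ, ρP, ρB, ρX => ¬ PDW.Sat d φ ρP ρB ρX
  | _, _, _, .exP φ, ρP, ρB, ρX => ∃ q : P ⊕ Q, PDW.Sat d φ (Fin.snoc ρP q) ρB ρX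
  | _, _, _, .exB φ, ρP, ρB, ρX => ∃ m : ℕ, d m ≠ none ∧
      (∀ j, procAt d m ≠ procAt d (ρB j)) ∧ PDW.Sat d φ ρP (Fin.snoc ρB m) ρX
  | _, _, _, .exX y φ, ρP, ρB, ρX => ∃ m : ℕ, d m ≠ none ∧ m < ρB y ∧
      procAt d m = procAt d (ρB y) ∧ PDW.Sat d φ ρP ρB (Fin.snoc ρX m)

/-- Satisfaction of a prefFO^dw sentence (no constants) in a data word. -/
def SatS {A B P Q : Type} (d : Word (DMove A B P Q)) (φ : PDW A B 0 0 0) : Prop :=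
  PDW.Sat d φ Fin.elim0 Fin.elim0 Fin.elim0

/-! ### Classes of a data word -/

/-- `m` is a position of process `q` in the data word `d`. -/
def isPosOf {A B P Q : Type} (d : Word (DMove A B P Q)) (q : P ⊕ Q) (m : ℕ) : Prop :=
  procAt d m = some q

open Classical in
/-- The class of process `q` in the data word `d`, as a (finite or infinite) word
over `A ⊕ B`: its `i`-th letter is the action taken at the `i`-th position of `q`. -/
noncomputable def classWord {A B P Q : Type} (d : Word (DMove A B P Q)) (q : P ⊕ Q) :
    Word (A ⊕ B) :=
  fun i =>
    if {m | isPosOf d q m}.Infinite ∨ i < Set.ncard {m | isPosOf d q m}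
    then actAt d (Nat.nth (isPosOf d q) i) else none

/-- The set of processes of `d` whose class has prefFO `k`-type `τ`. -/
def classesOfType {A B P Q : Type} (d : Word (DMove A B P Q)) (k : ℕ)
    (τ : Set (PSen (A ⊕ B))) : Set (P ⊕ Q) :=
  {q | tp k (classWord d q) = τ}

end PrefSynth
/-! ### The prefix Ehrenfeucht–Fraïssé game on data words (with constants) -/

namespace PrefSynth

/-- A pebble placed on a data word: a process pebble, a bounding pebble
or a prefix pebble. -/
inductive Peb (P Q : Type) : Type where
  | proc : P ⊕ Q → Peb P Q
  | bound : ℕ → Peb P Q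
  | pref : ℕ → Peb P Q

/-- The element on which a pebble is placed. -/
def Peb.elem {P Q : Type} : Peb P Q → Elem P Q
  | .proc q => Sum.inl q
  | .bound m => Sum.inr m
  | .pref m => Sum.inr m

/-- `e` is a System process element. -/
def IsProcSE {P Q : Type} (e : Elem P Q) : Prop := ∃ q : P, e = Sum.inl (Sum.inl q)

/-- `e` is an Environment process element. -/
def IsProcEE {P Q : Type} (e : Elem P Q) : Prop := ∃ q : Q, e = Sum.inl (Sum.inr q)

/-- `e` is a position labelled by the letter `a`. -/
def LetterIsE {A B P Q : Type} (d : Word (DMove A B P Q)) (e : Elem P Q) (a : A ⊕ B) :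
    Prop := ∃ m : ℕ, e = Sum.inr m ∧ actAt d m = some a

/-- `e ∼ f` in the data word `d`. -/
def SimE {A B P Q : Type} (d : Word (DMove A B P Q)) (e f : Elem P Q) : Prop :=
  ∃ q, classOfE d e = some q ∧ classOfE d f = some q

/-- `e ≲ f` in the data word `d`. -/
def LesimE {A B P Q : Type} (d : Word (DMove A B P Q)) (e f : Elem P Q) : Prop :=
  ∃ m m' : ℕ, e = Sum.inr m ∧ f = Sum.inr m' ∧ m < m' ∧ SimE d e f

/-- Agreement of a correspondence between elements of two data words: it must
preserve equality, `Proc_S`, `Proc_E`, the letters, `≲` and `∼`. -/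
def AgreeDW {A B P Q P' Q' : Type} (d : Word (DMove A B P Q))
    (d' : Word (DMove A B P' Q')) (E : List (Elem P Q × Elem P' Q')) : Prop :=
  ∀ e ∈ E, ∀ f ∈ E,
    ((e.1 = f.1) ↔ (e.2 = f.2)) ∧
    (IsProcSE e.1 ↔ IsProcSE e.2) ∧
    (IsProcEE e.1 ↔ IsProcEE e.2) ∧
    (∀ a : A ⊕ B, LetterIsE d e.1 a ↔ LetterIsE d' e.2 a) ∧
    (LesimE d e.1 f.1 ↔ LesimE d' e.2 f.2) ∧
    (SimE d e.1 f.1 ↔ SimE d' e.2 f.2)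

/-- A legal bounding move: a position whose class contains no previously placed
bounding pebble (from `l`) and no bounding constant (from `B0`). -/
def LegalBound {A B P Q : Type} (d : Word (DMove A B P Q)) (B0 : List ℕ)
    (l : List (Peb P Q)) (m : ℕ) : Prop :=
  d m ≠ none ∧ (∀ m₀ : ℕ, Peb.bound m₀ ∈ l → procAt d m ≠ procAt d m₀) ∧
    (∀ m₀ ∈ B0, procAt d m ≠ procAt d m₀)

/-- A legal prefix move: a position such that some previously placed bounding
pebble or bounding constant lies in the same class, at a later position. -/
def LegalPref {A B P Q : Type} (d : Word (DMove A B P Q)) (B0 : List ℕ)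
    (l : List (Peb P Q)) (m : ℕ) : Prop :=
  d m ≠ none ∧
    ∃ m₀ : ℕ, (Peb.bound m₀ ∈ l ∨ m₀ ∈ B0) ∧ m < m₀ ∧ procAt d m = procAt d m₀

/-- The matched pairs of elements determined by the constants `E0` and the
pebbles `L`. -/
def pairElems {P Q P' Q' : Type} (E0 : List (Elem P Q × Elem P' Q'))
    (L : List (Peb P Q × Peb P' Q')) : List (Elem P Q × Elem P' Q') :=
  E0 ++ L.map (fun pq => (pq.1.elem, pq.2.elem))

/-- `DupWinDW d d' E0 B0 B0' r L`: Duplicator wins the `r`-round prefix EF game on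
the data words `d` and `d'` with matched constant elements `E0` (the bounding
constants being interpreted by `B0` in `d` and by `B0'` in `d'`) and already
placed matched pebbles `L`. -/
def DupWinDW {A B P Q P' Q' : Type} (d : Word (DMove A B P Q))
    (d' : Word (DMove A B P' Q')) (E0 : List (Elem P Q × Elem P' Q'))
    (B0 B0' : List ℕ) : ℕ → List (Peb P Q × Peb P' Q') → Prop
  | 0, L => AgreeDW d d' (pairElems E0 L)
  | r + 1, L => AgreeDW d d' (pairElems E0 L) ∧
      (∀ q : P ⊕ Q, ∃ q' : P' ⊕ Q',
        DupWinDW d d' E0 B0 B0' r ((Peb.proc q, Peb.proc q') :: L)) ∧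
      (∀ q' : P' ⊕ Q', ∃ q : P ⊕ Q,
        DupWinDW d d' E0 B0 B0' r ((Peb.proc q, Peb.proc q') :: L)) ∧
      (∀ m : ℕ, LegalBound d B0 (L.map Prod.fst) m →
        ∃ m' : ℕ, LegalBound d' B0' (L.map Prod.snd) m' ∧
          DupWinDW d d' E0 B0 B0' r ((Peb.bound m, Peb.bound m') :: L)) ∧
      (∀ m' : ℕ, LegalBound d' B0' (L.map Prod.snd) m' →
        ∃ m : ℕ, LegalBound d B0 (L.map Prod.fst) m ∧
          DupWinDW d d' E0 B0 B0' r ((Peb.bound m, Peb.bound m') :: L)) ∧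
      (∀ m : ℕ, LegalPref d B0 (L.map Prod.fst) m →
        ∃ m' : ℕ, LegalPref d' B0' (L.map Prod.snd) m' ∧
          DupWinDW d d' E0 B0 B0' r ((Peb.pref m, Peb.pref m') :: L)) ∧
      (∀ m' : ℕ, LegalPref d' B0' (L.map Prod.snd) m' →
        ∃ m : ℕ, LegalPref d B0 (L.map Prod.fst) m ∧
          DupWinDW d d' E0 B0 B0' r ((Peb.pref m, Peb.pref m') :: L))

/-- The constants of a data word: interpretations of `cp` process constants,
`cb` bounding constants and `cx` prefix constants.  Validity: bounding and
prefix constants are positions, no two bounding constants share a class, and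
each prefix constant is `≲` some bounding constant. -/
def ValidConsts {A B P Q : Type} {cp cb cx : ℕ} (d : Word (DMove A B P Q))
    (γP : Fin cp → P ⊕ Q) (γB : Fin cb → ℕ) (γX : Fin cx → ℕ) : Prop :=
  (∀ j, d (γB j) ≠ none) ∧ (∀ j, d (γX j) ≠ none) ∧
  (∀ i j, i ≠ j → procAt d (γB i) ≠ procAt d (γB j)) ∧
  (∀ i, ∃ j, γX i < γB j ∧ procAt d (γX i) = procAt d (γB j))

/-- The matched constant elements determined by two interpretations of the same
constant symbols. -/
def constPairs {P Q P' Q' : Type} {cp cb cx : ℕ}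
    (γP : Fin cp → P ⊕ Q) (γB : Fin cb → ℕ) (γX : Fin cx → ℕ)
    (γP' : Fin cp → P' ⊕ Q') (γB' : Fin cb → ℕ) (γX' : Fin cx → ℕ) :
    List (Elem P Q × Elem P' Q') :=
  (List.ofFn fun i : Fin cp =>
    ((Sum.inl (γP i) : Elem P Q), (Sum.inl (γP' i) : Elem P' Q'))) ++
  (List.ofFn fun i : Fin cb =>
    ((Sum.inr (γB i) : Elem P Q), (Sum.inr (γB' i) : Elem P' Q'))) ++
  (List.ofFn fun i : Fin cx =>
    ((Sum.inr (γX i) : Elem P Q), (Sum.inr (γX' i) : Elem P' Q')))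

/-! ### The standard synthesis game -/

/-- A System strategy in the standard synthesis game: given the finite data word
played so far, output a System action and process, or pass (`none` plays the
role of `ε`). -/
abbrev Strat (A B P Q : Type) : Type := List (DMove A B P Q) → Option (A × P)

/-- The list of the first `n` moves of a data word. -/
def histList {M : Type} (d : Word M) (n : ℕ) : List M := (List.range n).filterMap d

/-- The data word `d` is compatible with the System strategy `σ`. -/
def CompatibleStd {A B P Q : Type} (σ : Strat A B P Q) (d : Word (DMove A B P Q)) :
    Prop :=
  ∀ i a p, d i = some (Sum.inl (a, p)) → σ (histList d i) = some (a, p)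

/-- The data word `d` is fair with respect to `σ`: either it is finite and `σ`
passes after it, or (being infinite) if `σ` wants to play infinitely often then
System actions occur infinitely often. -/
def FairStd {A B P Q : Type} (σ : Strat A B P Q) (d : Word (DMove A B P Q)) : Prop :=
  (∃ n, d n = none ∧ (∀ i, i < n → d i ≠ none) ∧ σ (histList d n) = none) ∨
  ((∀ n, d n ≠ none) ∧
    ((∀ N, ∃ i, N ≤ i ∧ σ (histList d (i + 1)) ≠ none) →
     (∀ N, ∃ i, N ≤ i ∧ ∃ a p, d i = some (Sum.inl (a, p)))))

/-- `σ` is winning for `φ` in the standard synthesis game: every compatible and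
fair data word satisfies `φ`. -/
def WinningStd {A B P Q : Type} (φ : PDW A B 0 0 0) (σ : Strat A B P Q) : Prop :=
  ∀ d : Word (DMove A B P Q), Word.Closed d → CompatibleStd σ d → FairStd σ d →
    SatS d φ

/-- System has an `(nS, nE)`-winning strategy for `φ` in the standard synthesis
game: a winning strategy whenever `|P_S| = nS` and `|P_E| = nE`. -/
def SystemWinsStd (A B : Type) (φ : PDW A B 0 0 0) (nS nE : ℕ) : Prop :=
  ∀ (P Q : Type), Finite P → Finite Q → Nat.card P = nS → Nat.card Q = nE →
    ∃ σ : Strat A B P Q, WinningStd φ σ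

/-! ### The symmetric game -/

/-- A System strategy in the symmetric game: may answer by any finite sequence
of System moves (`[]` playing the role of `ε`). -/
abbrev SymStrat (A B P Q : Type) : Type := List (DMove A B P Q) → List (A × P)

/-- The history after `n` rounds of the symmetric game, the Environment playing
the finite blocks `env 0, env 1, …` and System answering according to `σ`,
with strict alternation, Environment first. -/
def symHist {A B P Q : Type} (σ : SymStrat A B P Q) (env : ℕ → List (B × Q)) :
    ℕ → List (DMove A B P Q)
  | 0 => []
  | n + 1 =>
      let h := symHist σ env n ++ (env n).map Sum.inr
      h ++ (σ h).map Sum.inl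

/-- The data word `d` is compatible with the symmetric strategy `σ`: it is the
limit of the histories of an alternating play in which System follows `σ`. -/
def CompatibleSym {A B P Q : Type} (σ : SymStrat A B P Q)
    (d : Word (DMove A B P Q)) : Prop :=
  ∃ env : ℕ → List (B × Q),
    (∀ n i x, (symHist σ env n)[i]? = some x → d i = some x) ∧
    (∀ i, d i ≠ none → ∃ n, i < (symHist σ env n).length)

/-- Fairness in the symmetric game: if `d` is finite then `σ` passes after it. -/
def FairSym {A B P Q : Type} (σ : SymStrat A B P Q) (d : Word (DMove A B P Q)) :
    Prop :=
  ∀ n, d n = none → (∀ i, i < n → d i ≠ none) → σ (histList d n) = []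

/-- `σ` is winning for `φ` in the symmetric game. -/
def WinningSym {A B P Q : Type} (φ : PDW A B 0 0 0) (σ : SymStrat A B P Q) : Prop :=
  ∀ d : Word (DMove A B P Q), Word.Closed d → CompatibleSym σ d → FairSym σ d →
    SatS d φ

/-- System has an `(nS, nE)`-winning strategy for `φ` in the symmetric game. -/
def SystemWinsSym (A B : Type) (φ : PDW A B 0 0 0) (nS nE : ℕ) : Prop :=
  ∀ (P Q : Type), Finite P → Finite Q → Nat.card P = nS → Nat.card Q = nE →
    ∃ σ : SymStrat A B P Q, WinningSym φ σ

/-! ### The token game on types -/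

/-- A node of the arena: a prefFO `k`-type of finite words. -/
abbrev Typ (A : Type) (k : ℕ) : Type := {T : Set (PSen A) // T ∈ WTypes A k}

/-- The initial node: the type of the empty word. -/
def initTyp (A : Type) (k : ℕ) : Typ A k :=
  ⟨tp k (Word.ofList ([] : List A)), ⟨[], rfl⟩⟩

/-- The transition relation of the arena. -/
def typLe {A : Type} {k : ℕ} (τ τ' : Typ A k) : Prop := typeLe k τ.1 τ'.1

/-- A configuration: the position of each token in the arena.  `TS` and `TE` are
the sets of System and Environment tokens. -/
abbrev Conf (A : Type) (k : ℕ) (TS TE : Type) : Type := (TS ⊕ TE) → Typ A k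

/-- A System strategy in the token game: given the sequence of configurations
so far, where to move each System token. -/
abbrev TokStrat (A : Type) (k : ℕ) (TS TE : Type) : Type :=
  List (Conf A k TS TE) → TS → Typ A k

/-- A play of the token game: all tokens start on the initial node, tokens only
move along `⪯`, and the players strictly alternate, Environment first (at even
stages Environment moves, so System tokens stay put; at odd stages System moves). -/
def IsPlay {A : Type} {k : ℕ} {TS TE : Type} (conf : ℕ → Conf A k TS TE) : Prop :=
  (∀ t, conf 0 t = initTyp A k) ∧
  (∀ n t, typLe (conf n t) (conf (n + 1) t)) ∧
  (∀ n, Even n → ∀ t : TS, conf (n + 1) (Sum.inl t) = conf n (Sum.inl t)) ∧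
  (∀ n, ¬ Even n → ∀ t : TE, conf (n + 1) (Sum.inr t) = conf n (Sum.inr t))

/-- The play `conf` is compatible with the System strategy `σ`. -/
def CompatibleTok {A : Type} {k : ℕ} {TS TE : Type} (σ : TokStrat A k TS TE)
    (conf : ℕ → Conf A k TS TE) : Prop :=
  ∀ n, ¬ Even n → ∀ t : TS,
    conf (n + 1) (Sum.inl t) = σ (List.ofFn (fun i : Fin (n + 1) => conf i)) t

/-- The strategy `σ` only suggests legal moves (along `⪯`). -/
def StratLegal {A : Type} {k : ℕ} {TS TE : Type} (σ : TokStrat A k TS TE) : Prop :=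
  ∀ (h : List (Conf A k TS TE)) (hne : h ≠ []) (t : TS),
    typLe (h.getLast hne (Sum.inl t)) (σ h t)

/-- A configuration matches a `k`-counting function `c` (values `≥ k`
representing `k+`): the number of tokens on each type `τ` is exactly `c τ` when
`c τ < k`, and at least `k` otherwise. -/
def CfgMatches {A : Type} {k : ℕ} {TS TE : Type} (c : Typ A k → ℕ)
    (cfg : Conf A k TS TE) : Prop :=
  ∀ τ : Typ A k,
    (c τ < k → Nat.card {t : TS ⊕ TE // cfg t = τ} = c τ) ∧
    (¬ c τ < k → k ≤ Nat.card {t : TS ⊕ TE // cfg t = τ})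

/-- The acceptance set `Acc_φ`: the `k`-counting functions `c` such that every
data word whose numbers of classes of each prefFO `k`-type match `c` satisfies
`φ`. -/
def AccC (A B : Type) (k : ℕ) (φ : PDW A B 0 0 0) (c : Typ (A ⊕ B) k → ℕ) : Prop :=
  (∀ τ, c τ ≤ k) ∧
  ∀ (P Q : Type) (d : Word (DMove A B P Q)), Word.Closed d →
    (∀ τ : Typ (A ⊕ B) k,
      (c τ < k → Cardinal.mk ↥(classesOfType d k τ.1) = (c τ : Cardinal)) ∧
      (¬ c τ < k → (k : Cardinal) ≤ Cardinal.mk ↥(classesOfType d k τ.1))) →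
    SatS d φ

/-- The strategy `σ` is winning in the token game for `φ`: every compatible
maximal play stabilizes in a limit configuration satisfying the acceptance
condition. -/
def TokWinning {A B : Type} {k : ℕ} {TS TE : Type} (φ : PDW A B 0 0 0)
    (σ : TokStrat (A ⊕ B) k TS TE) : Prop :=
  ∀ conf : ℕ → Conf (A ⊕ B) k TS TE, IsPlay conf → CompatibleTok σ conf →
    ∃ N, (∀ n, N ≤ n → conf n = conf N) ∧
      ∃ c : Typ (A ⊕ B) k → ℕ, AccC A B k φ c ∧ CfgMatches c (conf N)

/-- The pair `(nS, nE)` is winning for System in the token game for `φ` (of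
depth `k`). -/
def SystemWinsTok (A B : Type) (k : ℕ) (φ : PDW A B 0 0 0) (nS nE : ℕ) : Prop :=
  ∀ (TS TE : Type), Finite TS → Finite TE → Nat.card TS = nS → Nat.card TE = nE →
    ∃ σ : TokStrat (A ⊕ B) k TS TE, StratLegal σ ∧ TokWinning φ σ

/-! ### An explicit encoding of prefFO^dw sentences, for decidability -/

/-- Encoding of a variable. -/
def encodeDVar {p b x : ℕ} : DVar p b x → ℕ
  | .inl i => Nat.pair 0 i.1
  | .inr (.inl i) => Nat.pair 1 i.1
  | .inr (.inr i) => Nat.pair 2 i.1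

/-- An explicit injective encoding of prefFO^dw formulas over the alphabets
`Fin m` and `Fin n` into the natural numbers. -/
def encodePDW {m n : ℕ} : {p b x : ℕ} → PDW (Fin m) (Fin n) p b x → ℕ
  | _, _, _, .eq v w => Nat.pair 0 (Nat.pair (encodeDVar v) (encodeDVar w))
  | _, _, _, .procS i => Nat.pair 1 i.1
  | _, _, _, .procE i => Nat.pair 2 i.1
  | _, _, _, .letter a v =>
      Nat.pair 3 (Nat.pair
        (Sum.elim (fun i => Nat.pair 0 i.1) (fun j => Nat.pair 1 j.1) a)
        (Sum.elim (fun i => Nat.pair 0 i.1) (fun j => Nat.pair 1 j.1) v))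
  | _, _, _, .lesim i j => Nat.pair 4 (Nat.pair i.1 j.1)
  | _, _, _, .sim i v => Nat.pair 5 (Nat.pair i.1 (encodeDVar v))
  | _, _, _, .and φ ψ => Nat.pair 6 (Nat.pair (encodePDW φ) (encodePDW ψ))
  | _, _, _, .not φ => Nat.pair 7 (encodePDW φ)
  | _, _, _, .exP φ => Nat.pair 8 (encodePDW φ)
  | _, _, _, .exB φ => Nat.pair 9 (encodePDW φ)
  | _, _, _, .exX y φ => Nat.pair 10 (Nat.pair y.1 (encodePDW φ))

end PrefSynth

namespace PrefSynth

section EFGames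

variable {A : Type}

/-- Agreement of matched pebbles `p` (on `x`) and `q` (on `y`). -/
def Agr (x y : List A) {ι : Type} (p q : ι → ℕ) : Prop :=
  ∀ i j : ι, (p i < p j ↔ q i < q j) ∧ (p i = p j ↔ q i = q j) ∧ x[p i]? = y[q i]?

/-- Extend a pebble assignment by one new pebble. -/
def pext {ι : Type} (p : ι → ℕ) (m : ℕ) : Option ι → ℕ := fun o => o.elim m p

@[simp] lemma pext_none {ι : Type} (p : ι → ℕ) (m : ℕ) : pext p m none = m := rfl
@[simp] lemma pext_some {ι : Type} (p : ι → ℕ) (m : ℕ) (i : ι) : pext p m (some i) = p i := rfl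

/-- Duplicator wins the `r`-round EF game on the words `x`, `y` with pebbles `p`, `q`. -/
def Win (x y : List A) : ℕ → (ι : Type) → (ι → ℕ) → (ι → ℕ) → Prop
  | 0, _, p, q => Agr x y p q
  | r+1, ι, p, q => Agr x y p q ∧
      (∀ m, m < x.length → ∃ m', m' < y.length ∧ Win x y r (Option ι) (pext p m) (pext q m')) ∧
      (∀ m', m' < y.length → ∃ m, m < x.length ∧ Win x y r (Option ι) (pext p m) (pext q m'))

variable {x y : List A}

lemma win_zero {ι : Type} {p q : ι → ℕ} : Win x y 0 ι p q ↔ Agr x y p q := Iff.rfl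

lemma win_succ {r : ℕ} {ι : Type} {p q : ι → ℕ} : Win x y (r+1) ι p q ↔
    (Agr x y p q ∧
      (∀ m, m < x.length → ∃ m', m' < y.length ∧ Win x y r (Option ι) (pext p m) (pext q m')) ∧
      (∀ m', m' < y.length → ∃ m, m < x.length ∧ Win x y r (Option ι) (pext p m) (pext q m'))) :=
  Iff.rfl

lemma Win.agr : ∀ {r : ℕ} {ι : Type} {p q : ι → ℕ}, Win x y r ι p q → Agr x y p q
  | 0, _, _, _, h => h
  | _+1, _, _, _, h => h.1

lemma Agr.symm {ι : Type} {p q : ι → ℕ} (h : Agr x y p q) : Agr y x q p := by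
  intro i j
  obtain ⟨h1, h2, h3⟩ := h i j
  exact ⟨h1.symm, h2.symm, h3.symm⟩

lemma Win.symm : ∀ (r : ℕ) {ι : Type} {p q : ι → ℕ}, Win x y r ι p q → Win y x r ι q p
  | 0, _, _, _, h => Agr.symm h
  | r+1, _, _, _, h => by
      obtain ⟨ha, h1, h2⟩ := h
      refine ⟨ha.symm, ?_, ?_⟩
      · intro m' hm'
        obtain ⟨m, hm, hw⟩ := h2 m' hm'
        exact ⟨m, hm, Win.symm r hw⟩
      · intro m hm
        obtain ⟨m', hm', hw⟩ := h1 m hm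
        exact ⟨m', hm', Win.symm r hw⟩

lemma Win.mono : ∀ (r : ℕ) {ι ι' : Type} {p q : ι → ℕ} {p' q' : ι' → ℕ},
    (∀ i, ∃ i', p i = p' i' ∧ q i = q' i') → Win x y r ι' p' q' → Win x y r ι p q
  | 0, _, _, p, q, p', q', hm, h => by
      intro i j
      obtain ⟨i', hi1, hi2⟩ := hm i
      obtain ⟨j', hj1, hj2⟩ := hm j
      rw [hi1, hi2, hj1, hj2]
      exact h i' j'
  | r+1, ι, ι', p, q, p', q', hm, h => by
      obtain ⟨ha, h1, h2⟩ := h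
      refine ⟨?_, ?_, ?_⟩
      · intro i j
        obtain ⟨i', hi1, hi2⟩ := hm i
        obtain ⟨j', hj1, hj2⟩ := hm j
        rw [hi1, hi2, hj1, hj2]; exact ha i' j'
      · intro m hmx
        obtain ⟨m', hm', hw⟩ := h1 m hmx
        refine ⟨m', hm', Win.mono r ?_ hw⟩
        rintro (_ | i)
        · exact ⟨none, rfl, rfl⟩
        · obtain ⟨i', hi1, hi2⟩ := hm i
          exact ⟨some i', by simpa using hi1, by simpa using hi2⟩
      · intro m' hm'
        obtain ⟨m, hmx, hw⟩ := h2 m' hm'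
        refine ⟨m, hmx, Win.mono r ?_ hw⟩
        rintro (_ | i)
        · exact ⟨none, rfl, rfl⟩
        · obtain ⟨i', hi1, hi2⟩ := hm i
          exact ⟨some i', by simpa using hi1, by simpa using hi2⟩

lemma Win.step : ∀ (r : ℕ) {ι : Type} {p q : ι → ℕ}, Win x y (r+1) ι p q → Win x y r ι p q
  | 0, _, _, _, h => h.1
  | r+1, _, _, _, h => by
      obtain ⟨ha, h1, h2⟩ := h
      refine ⟨ha, ?_, ?_⟩
      · intro m hm
        obtain ⟨m', hm', hw⟩ := h1 m hm
        exact ⟨m', hm', Win.step r hw⟩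
      · intro m' hm'
        obtain ⟨m, hm, hw⟩ := h2 m' hm'
        exact ⟨m, hm, Win.step r hw⟩

lemma Win.le {r r' : ℕ} (h : r' ≤ r) {ι : Type} {p q : ι → ℕ}
    (hw : Win x y r ι p q) : Win x y r' ι p q := by
  induction r with
  | zero =>
      have : r' = 0 := by omega
      subst this; exact hw
  | succ n ih =>
      rcases Nat.lt_or_ge r' (n+1) with hlt | hge
      · exact ih (by omega) (Win.step n hw)
      · have : r' = n+1 := by omega
        subst this; exact hw

lemma Win.refl : ∀ (r : ℕ) {ι : Type} (p : ι → ℕ), Win x x r ι p p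
  | 0, _, _ => fun _ _ => ⟨Iff.rfl, Iff.rfl, rfl⟩
  | r+1, _, _ => ⟨fun _ _ => ⟨Iff.rfl, Iff.rfl, rfl⟩,
      fun m hm => ⟨m, hm, Win.refl r _⟩, fun m hm => ⟨m, hm, Win.refl r _⟩⟩

/-- The side condition for the append lemma: every pebble pair is either a pair of
matched old positions, or a pair of new positions at the same offset. -/
def OkP (x y : List A) {ι : Type} (P Q : ι → ℕ) : Prop :=
  ∀ i, (P i < x.length ∧ Q i < y.length) ∨ (∃ j, P i = x.length + j ∧ Q i = y.length + j)

lemma Agr.append {z : List A} {ι : Type} {P Q : ι → ℕ} (hok : OkP x y P Q)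
    (h : Agr x y (fun i : {i : ι // P i < x.length} => P i.1)
                 (fun i : {i : ι // P i < x.length} => Q i.1)) :
    Agr (x ++ z) (y ++ z) P Q := by
  intro i j
  have letters : ∀ i : ι, (x ++ z)[P i]? = (y ++ z)[Q i]? := by
    intro i
    rcases hok i with ⟨h1, h2⟩ | ⟨t, h1, h2⟩
    · rw [List.getElem?_append_left h1, List.getElem?_append_left h2]
      exact (h ⟨i, h1⟩ ⟨i, h1⟩).2.2
    · rw [h1, h2, List.getElem?_append_right (Nat.le_add_right _ _),
        List.getElem?_append_right (Nat.le_add_right _ _)]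
      simp
  rcases hok i with ⟨hi1, hi2⟩ | ⟨t, hi1, hi2⟩ <;> rcases hok j with ⟨hj1, hj2⟩ | ⟨s, hj1, hj2⟩
  · exact ⟨(h ⟨i, hi1⟩ ⟨j, hj1⟩).1, (h ⟨i, hi1⟩ ⟨j, hj1⟩).2.1, letters i⟩
  · refine ⟨?_, ?_, letters i⟩
    · constructor <;> intro _ <;> omega
    · constructor <;> intro _ <;> omega
  · refine ⟨?_, ?_, letters i⟩
    · constructor <;> intro _ <;> omega
    · constructor <;> intro _ <;> omega
  · refine ⟨?_, ?_, letters i⟩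
    · constructor <;> intro _ <;> omega
    · constructor <;> intro _ <;> omega

/-- Appending a common suffix preserves the EF game. -/
lemma Win.append (z : List A) : ∀ (r : ℕ) {ι : Type} (P Q : ι → ℕ), OkP x y P Q →
    Win x y r {i : ι // P i < x.length} (fun i => P i.1) (fun i => Q i.1) →
    Win (x ++ z) (y ++ z) r ι P Q
  | 0, ι, P, Q, hok, h => Agr.append hok h
  | r+1, ι, P, Q, hok, h => by
      obtain ⟨ha, h1, h2⟩ := h
      refine ⟨Agr.append hok ha, ?_, ?_⟩
      · intro m hm
        rw [List.length_append] at hm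
        by_cases hmx : m < x.length
        · obtain ⟨m', hm', hw⟩ := h1 m hmx
          refine ⟨m', by rw [List.length_append]; omega, ?_⟩
          refine Win.append z r (pext P m) (pext Q m') ?_ ?_
          · rintro (_ | i)
            · exact Or.inl ⟨hmx, hm'⟩
            · exact hok i
          · refine Win.mono r ?_ hw
            rintro ⟨(_ | i), hsub⟩
            · exact ⟨none, rfl, rfl⟩
            · exact ⟨some ⟨i, by simpa using hsub⟩, rfl, rfl⟩
        · set t := m - x.length with ht
          refine ⟨y.length + t, by rw [List.length_append]; omega, ?_⟩
          refine Win.append z r (pext P m) (pext Q (y.length + t)) ?_ ?_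
          · rintro (_ | i)
            · exact Or.inr ⟨t, by simp only [pext_none]; omega, by simp only [pext_none]⟩
            · exact hok i
          · refine Win.mono r ?_ (Win.step r ⟨ha, h1, h2⟩)
            rintro ⟨(_ | i), hsub⟩
            · simp only [pext_none] at hsub; omega
            · exact ⟨⟨i, by simpa using hsub⟩, rfl, rfl⟩
      · intro m' hm'
        rw [List.length_append] at hm'
        by_cases hmy : m' < y.length
        · obtain ⟨m, hm, hw⟩ := h2 m' hmy
          refine ⟨m, by rw [List.length_append]; omega, ?_⟩
          refine Win.append z r (pext P m) (pext Q m') ?_ ?_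
          · rintro (_ | i)
            · exact Or.inl ⟨hm, hmy⟩
            · exact hok i
          · refine Win.mono r ?_ hw
            rintro ⟨(_ | i), hsub⟩
            · exact ⟨none, rfl, rfl⟩
            · exact ⟨some ⟨i, by simpa using hsub⟩, rfl, rfl⟩
        · set t := m' - y.length with ht
          refine ⟨x.length + t, by rw [List.length_append]; omega, ?_⟩
          refine Win.append z r (pext P (x.length + t)) (pext Q m') ?_ ?_
          · rintro (_ | i)
            · exact Or.inr ⟨t, by simp only [pext_none], by simp only [pext_none]; omega⟩
            · exact hok i
          · refine Win.mono r ?_ (Win.step r ⟨ha, h1, h2⟩)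
            rintro ⟨(_ | i), hsub⟩
            · simp only [pext_none] at hsub; omega
            · exact ⟨⟨i, by simpa using hsub⟩, rfl, rfl⟩

/-- The pebble-free EF game. -/
def WinN (x y : List A) (r : ℕ) : Prop := Win x y r (Fin 0) (fun i => i.elim0) (fun i => i.elim0)

lemma WinN.of_win {r : ℕ} {ι : Type} {p q : ι → ℕ} (h : Win x y r ι p q) : WinN x y r :=
  Win.mono r (fun i => i.elim0) h

lemma WinN.to_win {r : ℕ} (p q : Fin 0 → ℕ) (h : WinN x y r) : Win x y r (Fin 0) p q :=
  Win.mono r (fun i => i.elim0) h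

lemma WinN.symm {r : ℕ} (h : WinN x y r) : WinN y x r := Win.symm r h

lemma WinN.refl (r : ℕ) : WinN x x r := Win.refl r _

lemma WinN.append (z : List A) {r : ℕ} (h : WinN x y r) : WinN (x ++ z) (y ++ z) r := by
  refine WinN.of_win (x := x ++ z) (y := y ++ z)
    (ι := PEmpty) (p := fun i => i.elim) (q := fun i => i.elim) ?_
  refine Win.append z r _ _ (fun i => i.elim) ?_
  exact Win.mono r (fun i => i.1.elim) h

end EFGames

section Formulas

variable {A : Type}

/-- Truth in a context with at least one variable. -/
def tru {n : ℕ} : PFm A (n + 1) := .eq 0 0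

@[simp] lemma sat_tru {n : ℕ} (w : Word A) (ρ : Fin (n+1) → ℕ) :
    PFm.Sat w (tru : PFm A (n+1)) ρ := rfl

@[simp] lemma depth_tru {n : ℕ} : (tru : PFm A (n+1)).depth = 0 := rfl

def bigAnd {n : ℕ} : List (PFm A (n + 1)) → PFm A (n + 1)
  | [] => tru
  | φ :: l => .and φ (bigAnd l)

def bigOr {n : ℕ} : List (PFm A (n + 1)) → PFm A (n + 1)
  | [] => .not tru
  | φ :: l => .not (.and (.not φ) (.not (bigOr l)))

lemma sat_bigAnd {n : ℕ} (w : Word A) (ρ : Fin (n+1) → ℕ) :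
    ∀ (l : List (PFm A (n+1))), PFm.Sat w (bigAnd l) ρ ↔ ∀ φ ∈ l, PFm.Sat w φ ρ
  | [] => by simp [bigAnd]
  | φ :: l => by
      simp only [bigAnd, PFm.Sat, sat_bigAnd w ρ l, List.mem_cons]
      constructor
      · rintro ⟨h1, h2⟩ ψ (rfl | hψ)
        · exact h1
        · exact h2 ψ hψ
      · intro h
        exact ⟨h φ (Or.inl rfl), fun ψ hψ => h ψ (Or.inr hψ)⟩

lemma sat_bigOr {n : ℕ} (w : Word A) (ρ : Fin (n+1) → ℕ) :
    ∀ (l : List (PFm A (n+1))), PFm.Sat w (bigOr l) ρ ↔ ∃ φ ∈ l, PFm.Sat w φ ρ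
  | [] => by simp [bigOr, PFm.Sat]
  | φ :: l => by
      simp only [bigOr, PFm.Sat, sat_bigOr w ρ l, List.mem_cons]
      constructor
      · intro h
        rcases Classical.em (PFm.Sat w φ ρ) with hφ | hφ
        · exact ⟨φ, Or.inl rfl, hφ⟩
        · rcases Classical.em (∃ ψ ∈ l, PFm.Sat w ψ ρ) with ⟨ψ, hψ, hs⟩ | hn
          · exact ⟨ψ, Or.inr hψ, hs⟩
          · exact absurd ⟨hφ, hn⟩ h
      · rintro ⟨ψ, (rfl | hψ), hs⟩ ⟨h1, h2⟩
        · exact h1 hs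
        · exact h2 ⟨ψ, hψ, hs⟩

lemma depth_bigAnd {n r : ℕ} :
    ∀ {l : List (PFm A (n+1))}, (∀ φ ∈ l, φ.depth ≤ r) → (bigAnd l).depth ≤ r
  | [], _ => by simp [bigAnd]
  | φ :: l, h => by
      simp only [bigAnd, PFm.depth, max_le_iff]
      exact ⟨h φ (List.mem_cons_self),
        depth_bigAnd (fun ψ hψ => h ψ (List.mem_cons_of_mem _ hψ))⟩

lemma depth_bigOr {n r : ℕ} :
    ∀ {l : List (PFm A (n+1))}, (∀ φ ∈ l, φ.depth ≤ r) → (bigOr l).depth ≤ r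
  | [], _ => by simp [bigOr, PFm.depth]
  | φ :: l, h => by
      simp only [bigOr, PFm.depth, max_le_iff]
      exact ⟨h φ (List.mem_cons_self),
        depth_bigOr (fun ψ hψ => h ψ (List.mem_cons_of_mem _ hψ))⟩

/-- Letter description of pebble `i`. -/
def letterF (x : List A) {n : ℕ} (p : Fin n → ℕ) (i : Fin n) : PFm A (n+1) :=
  (x[p i]?).elim tru (fun a => .letter a i.succ)

/-- Full atomic description of the pebbled word `(x, p)`. -/
def atomF (x : List A) {n : ℕ} (p : Fin n → ℕ) : PFm A (n + 1) :=
  .and (bigAnd ((List.finRange n).map fun i => bigAnd ((List.finRange n).map fun j =>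
      .and (if p i < p j then .lt i.succ j.succ else .not (.lt i.succ j.succ))
           (if p i = p j then .eq i.succ j.succ else .not (.eq i.succ j.succ)))))
       (bigAnd ((List.finRange n).map fun i => letterF x p i))

lemma depth_atomF {x : List A} {n : ℕ} {p : Fin n → ℕ} {r : ℕ} : (atomF x p).depth ≤ r := by
  simp only [atomF, PFm.depth, max_le_iff]
  constructor
  · refine depth_bigAnd ?_
    intro φ hφ
    rw [List.mem_map] at hφ
    obtain ⟨i, _, rfl⟩ := hφ
    refine depth_bigAnd ?_
    intro ψ hψ
    rw [List.mem_map] at hψ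
    obtain ⟨j, _, rfl⟩ := hψ
    simp only [PFm.depth, max_le_iff]
    constructor <;> split <;> simp [PFm.depth]
  · refine depth_bigAnd ?_
    intro φ hφ
    rw [List.mem_map] at hφ
    obtain ⟨i, _, rfl⟩ := hφ
    unfold letterF
    cases x[p i]? <;> simp [PFm.depth]

lemma sat_atomF {x y : List A} {n : ℕ} {p q : Fin n → ℕ} {b : ℕ}
    (hb : b ≤ y.length) (hp : ∀ i, p i < x.length) (hq : ∀ i, q i < b) :
    PFm.Sat (Word.ofList y) (atomF x p) (Fin.cons b q) ↔ Agr x (y.take b) p q := by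
  have hcs : ∀ i : Fin n, (Fin.cons b q : Fin (n+1) → ℕ) i.succ = q i :=
    fun i => by simp
  have hletter : ∀ i : Fin n, ∃ a : A, x[p i]? = some a :=
    fun i => ⟨x[p i]'(hp i), List.getElem?_eq_getElem (hp i)⟩
  constructor
  · intro h
    obtain ⟨h1, h2⟩ := h
    rw [sat_bigAnd, List.forall_mem_map] at h1
    rw [sat_bigAnd, List.forall_mem_map] at h2
    intro i j
    have hpi := h1 i (List.mem_finRange i)
    rw [sat_bigAnd, List.forall_mem_map] at hpi
    obtain ⟨hlt, heq⟩ := hpi j (List.mem_finRange j)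
    refine ⟨?_, ?_, ?_⟩
    · by_cases hij : p i < p j
      · rw [if_pos hij] at hlt
        have hres : q i < q j := by
          have := hlt
          simp only [PFm.Sat, hcs] at this
          exact this
        exact ⟨fun _ => hres, fun _ => hij⟩
      · rw [if_neg hij] at hlt
        have hres : ¬ q i < q j := by
          intro hh
          exact hlt (by simp only [PFm.Sat, hcs]; exact hh)
        exact ⟨fun hh => absurd hh hij, fun hh => absurd hh hres⟩
    · by_cases hij : p i = p j
      · rw [if_pos hij] at heq
        have hres : q i = q j := by
          have := heq
          simp only [PFm.Sat, hcs] at this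
          exact this
        exact ⟨fun _ => hres, fun _ => hij⟩
      · rw [if_neg hij] at heq
        have hres : ¬ q i = q j := by
          intro hh
          exact heq (by simp only [PFm.Sat, hcs]; exact hh)
        exact ⟨fun hh => absurd hh hij, fun hh => absurd hh hres⟩
    · obtain ⟨a, ha⟩ := hletter i
      have hl := h2 i (List.mem_finRange i)
      rw [letterF, ha] at hl
      have hres : (Word.ofList y) (q i) = some a := by
        simp only [Option.elim, PFm.Sat, hcs] at hl
        exact hl
      rw [ha, List.getElem?_take_of_lt (hq i)]
      exact hres.symm
  · intro hA
    refine ⟨?_, ?_⟩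
    · rw [sat_bigAnd, List.forall_mem_map]
      intro i _
      rw [sat_bigAnd, List.forall_mem_map]
      intro j _
      obtain ⟨hlt, heq, _⟩ := hA i j
      refine ⟨?_, ?_⟩
      · by_cases hij : p i < p j
        · rw [if_pos hij]
          simp only [PFm.Sat, hcs]
          exact hlt.mp hij
        · rw [if_neg hij]
          intro hh
          simp only [PFm.Sat, hcs] at hh
          exact hij (hlt.mpr hh)
      · by_cases hij : p i = p j
        · rw [if_pos hij]
          simp only [PFm.Sat, hcs]
          exact heq.mp hij
        · rw [if_neg hij]
          intro hh
          simp only [PFm.Sat, hcs] at hh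
          exact hij (heq.mpr hh)
    · rw [sat_bigAnd, List.forall_mem_map]
      intro i _
      obtain ⟨a, ha⟩ := hletter i
      have h3 := (hA i i).2.2
      rw [ha, List.getElem?_take_of_lt (hq i)] at h3
      rw [letterF, ha]
      simp only [Option.elim, PFm.Sat, hcs]
      exact h3.symm

end Formulas

section Hintikka

variable {A : Type}

lemma win_snoc_iff {x y' : List A} {r n : ℕ} {p q : Fin n → ℕ} {m m' : ℕ} :
    Win x y' r (Fin (n+1)) (Fin.snoc p m) (Fin.snoc q m') ↔
      Win x y' r (Option (Fin n)) (pext p m) (pext q m') := by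
  constructor
  · refine fun h => Win.mono r ?_ h
    rintro (_ | i)
    · exact ⟨Fin.last n, by simp, by simp⟩
    · exact ⟨i.castSucc, by simp, by simp⟩
  · refine fun h => Win.mono r ?_ h
    intro i
    refine Fin.lastCases ?_ ?_ i
    · exact ⟨none, by simp, by simp⟩
    · intro j
      exact ⟨some j, by simp, by simp⟩

/-- The prefFO Hintikka formula of the pebbled word `(x, p)` at depth `r`, relative to
a bounding variable. -/
def hinP (x : List A) : (r : ℕ) → {n : ℕ} → (Fin n → ℕ) → PFm A (n + 1)
  | 0, _, p => atomF x p
  | r+1, _, p => .and (atomF x p) (.and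
      (bigAnd ((List.range x.length).map fun m => .exlt (hinP x r (Fin.snoc p m))))
      (.not (.exlt (.not (bigOr ((List.range x.length).map fun m =>
        hinP x r (Fin.snoc p m)))))))

@[simp] lemma depth_and' {n : ℕ} (φ ψ : PFm A n) : (φ.and ψ).depth = max φ.depth ψ.depth := rfl
@[simp] lemma depth_not' {n : ℕ} (φ : PFm A n) : (φ.not).depth = φ.depth := rfl
@[simp] lemma depth_exlt' {n : ℕ} (φ : PFm A (n+2)) : (φ.exlt).depth = φ.depth + 1 := rfl

lemma depth_hinP {x : List A} : ∀ (r : ℕ) {n : ℕ} (p : Fin n → ℕ), (hinP x r p).depth ≤ r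
  | 0, _, p => depth_atomF
  | r+1, _, p => by
      have h2 : ∀ φ ∈ (List.range x.length).map fun m =>
          PFm.exlt (hinP x r (Fin.snoc p m)), PFm.depth φ ≤ r+1 := by
        intro φ hφ
        rw [List.mem_map] at hφ
        obtain ⟨m, _, rfl⟩ := hφ
        rw [depth_exlt']
        exact Nat.add_le_add_right (depth_hinP r _) 1
      have h3 : (bigOr ((List.range x.length).map fun m =>
          hinP x r (Fin.snoc p m))).depth ≤ r := by
        refine depth_bigOr ?_
        intro φ hφ
        rw [List.mem_map] at hφ
        obtain ⟨m, _, rfl⟩ := hφ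
        exact depth_hinP r _
      rw [hinP, depth_and', depth_and', depth_not', depth_exlt', depth_not']
      have h1 : (atomF x p).depth ≤ r + 1 := depth_atomF
      have h2' := depth_bigAnd h2
      omega

lemma hinP_iff (x y : List A) : ∀ (r : ℕ) {n : ℕ} (p q : Fin n → ℕ) (b : ℕ),
    b ≤ y.length → (∀ i, p i < x.length) → (∀ i, q i < b) →
    (PFm.Sat (Word.ofList y) (hinP x r p) (Fin.cons b q) ↔ Win x (y.take b) r (Fin n) p q)
  | 0, n, p, q, b, hb, hp, hq => by
      rw [hinP, win_zero]
      exact sat_atomF hb hp hq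
  | r+1, n, p, q, b, hb, hp, hq => by
      have hlen : (y.take b).length = b := by
        rw [List.length_take]; omega
      have hpos : ∀ mh : ℕ, mh < b → Word.pos (Word.ofList y) mh := by
        intro mh hmh
        show ¬ (y[mh]? = none)
        rw [List.getElem?_eq_none_iff]
        omega
      rw [hinP, win_succ]
      constructor
      · rintro ⟨hat, hex, hall⟩
        refine ⟨(sat_atomF hb hp hq).mp hat, ?_, ?_⟩
        · intro m hm
          rw [sat_bigAnd, List.forall_mem_map] at hex
          obtain ⟨mh, hmhpos, hmhlt, hmhsat⟩ := hex m (List.mem_range.mpr hm)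
          rw [Fin.cons_zero] at hmhlt
          rw [← Fin.cons_snoc_eq_snoc_cons] at hmhsat
          have hw := (hinP_iff x y r (Fin.snoc p m) (Fin.snoc q mh) b hb
            (fun i => by refine Fin.lastCases ?_ ?_ i <;> simp [hm, hp])
            (fun i => by refine Fin.lastCases ?_ ?_ i <;> simp [hmhlt, hq])).mp hmhsat
          exact ⟨mh, by omega, win_snoc_iff.mp hw⟩
        · intro m' hm'
          rw [hlen] at hm'
          have hor := hall
          simp only [PFm.Sat, not_exists, not_and, not_not] at hor
          have hsat := hor m' (hpos m' hm') (by rw [Fin.cons_zero]; exact hm')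
          rw [← Fin.cons_snoc_eq_snoc_cons, sat_bigOr] at hsat
          obtain ⟨φ, hφmem, hφ⟩ := hsat
          rw [List.mem_map] at hφmem
          obtain ⟨m, hmr, rfl⟩ := hφmem
          rw [List.mem_range] at hmr
          have hw := (hinP_iff x y r (Fin.snoc p m) (Fin.snoc q m') b hb
            (fun i => by refine Fin.lastCases ?_ ?_ i <;> simp [hmr, hp])
            (fun i => by refine Fin.lastCases ?_ ?_ i <;> simp [hm', hq])).mp hφ
          exact ⟨m, hmr, win_snoc_iff.mp hw⟩
      · rintro ⟨hA, mv1, mv2⟩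
        refine ⟨(sat_atomF hb hp hq).mpr hA, ?_, ?_⟩
        · rw [sat_bigAnd, List.forall_mem_map]
          intro m hm
          rw [List.mem_range] at hm
          obtain ⟨m', hm', hw⟩ := mv1 m hm
          rw [hlen] at hm'
          refine ⟨m', hpos m' hm', by rw [Fin.cons_zero]; exact hm', ?_⟩
          rw [← Fin.cons_snoc_eq_snoc_cons]
          exact (hinP_iff x y r (Fin.snoc p m) (Fin.snoc q m') b hb
            (fun i => by refine Fin.lastCases ?_ ?_ i <;> simp [hm, hp])
            (fun i => by refine Fin.lastCases ?_ ?_ i <;> simp [hm', hq])).mpr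
            (win_snoc_iff.mpr hw)
        · intro hcon
          obtain ⟨mh, hmhpos, hmhlt, hmhnot⟩ := hcon
          rw [Fin.cons_zero] at hmhlt
          obtain ⟨m, hm, hw⟩ := mv2 mh (by rw [hlen]; exact hmhlt)
          refine hmhnot ?_
          rw [← Fin.cons_snoc_eq_snoc_cons, sat_bigOr]
          refine ⟨hinP x r (Fin.snoc p m), List.mem_map.mpr ⟨m, List.mem_range.mpr hm, rfl⟩, ?_⟩
          exact (hinP_iff x y r (Fin.snoc p m) (Fin.snoc q mh) b hb
            (fun i => by refine Fin.lastCases ?_ ?_ i <;> simp [hm, hp])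
            (fun i => by refine Fin.lastCases ?_ ?_ i <;> simp [hmhlt, hq])).mpr
            (win_snoc_iff.mpr hw)

end Hintikka

section Transfer

variable {A : Type}

lemma pos_ofList {y : List A} {m : ℕ} (hm : m < y.length) : Word.pos (Word.ofList y) m := by
  show ¬ (y[m]? = none)
  rw [List.getElem?_eq_none_iff]
  omega

lemma pos_ofList_iff {y : List A} {m : ℕ} : Word.pos (Word.ofList y) m ↔ m < y.length := by
  constructor
  · intro h
    by_contra hc
    exact h (List.getElem?_eq_none (by omega))
  · exact pos_ofList

/-- Transfer of prefFO formulas along a winning EF position below matched bounding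
pebbles. -/
lemma pfm_transfer {w u : List A} {b b' : ℕ} (hb : b < w.length) (hb' : b' < u.length)
    (hl : w[b]? = u[b']?) :
    ∀ {n : ℕ} (φ : PFm A (n+1)) (r : ℕ), φ.depth ≤ r →
    ∀ (p q : Fin n → ℕ), (∀ i, p i < b) → (∀ i, q i < b') →
      Win (w.take b) (u.take b') r (Fin n) p q →
      (PFm.Sat (Word.ofList w) φ (Fin.cons b p) ↔ PFm.Sat (Word.ofList u) φ (Fin.cons b' q))
  | n, .eq i j, r, hd, p, q, hp, hq, hW => by
      have hA := hW.agr
      simp only [PFm.Sat]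
      refine Fin.cases ?_ ?_ i <;> [skip; intro i'] <;> refine Fin.cases ?_ ?_ j
      · simp
      · intro j'
        simp only [Fin.cons_zero, Fin.cons_succ]
        have h1 := hp j'
        have h2 := hq j'
        constructor <;> intro hh <;> omega
      · simp only [Fin.cons_zero, Fin.cons_succ]
        have h1 := hp i'
        have h2 := hq i'
        constructor <;> intro hh <;> omega
      · intro j'
        simp only [Fin.cons_succ]
        exact (hA i' j').2.1
  | n, .lt i j, r, hd, p, q, hp, hq, hW => by
      have hA := hW.agr
      simp only [PFm.Sat]
      refine Fin.cases ?_ ?_ i <;> [skip; intro i'] <;> refine Fin.cases ?_ ?_ j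
      · simp
      · intro j'
        simp only [Fin.cons_zero, Fin.cons_succ]
        have h1 := hp j'
        have h2 := hq j'
        constructor <;> intro hh <;> omega
      · simp only [Fin.cons_zero, Fin.cons_succ]
        have h1 := hp i'
        have h2 := hq i'
        constructor <;> intro hh <;> omega
      · intro j'
        simp only [Fin.cons_succ]
        exact (hA i' j').1
  | n, .letter a i, r, hd, p, q, hp, hq, hW => by
      have hA := hW.agr
      simp only [PFm.Sat]
      refine Fin.cases ?_ ?_ i
      · simp only [Fin.cons_zero]
        simp only [Word.ofList]
        rw [hl]
      · intro i'
        simp only [Fin.cons_succ]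
        simp only [Word.ofList]
        have h3 := (hA i' i').2.2
        rw [List.getElem?_take_of_lt (hp i'), List.getElem?_take_of_lt (hq i')] at h3
        rw [h3]
  | n, .and φ ψ, r, hd, p, q, hp, hq, hW => by
      rw [PFm.depth, max_le_iff] at hd
      exact and_congr (pfm_transfer hb hb' hl φ r hd.1 p q hp hq hW)
        (pfm_transfer hb hb' hl ψ r hd.2 p q hp hq hW)
  | n, .not φ, r, hd, p, q, hp, hq, hW => by
      rw [PFm.depth] at hd
      exact not_congr (pfm_transfer hb hb' hl φ r hd p q hp hq hW)
  | n, .exlt φ, r, hd, p, q, hp, hq, hW => by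
      rw [PFm.depth] at hd
      obtain ⟨r', rfl⟩ : ∃ r', r = r' + 1 := ⟨r - 1, by omega⟩
      obtain ⟨hA, mv1, mv2⟩ := hW
      have hlen1 : (w.take b).length = b := by rw [List.length_take]; omega
      have hlen2 : (u.take b').length = b' := by rw [List.length_take]; omega
      simp only [PFm.Sat]
      constructor
      · rintro ⟨m, hmpos, hmlt, hsat⟩
        rw [Fin.cons_zero] at hmlt
        obtain ⟨m', hm', hw'⟩ := mv1 m (by omega)
        rw [hlen2] at hm'
        refine ⟨m', pos_ofList (by omega), by rw [Fin.cons_zero]; exact hm', ?_⟩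
        rw [← Fin.cons_snoc_eq_snoc_cons] at hsat ⊢
        exact (pfm_transfer hb hb' hl φ r' (by omega) (Fin.snoc p m) (Fin.snoc q m')
          (fun i => by refine Fin.lastCases ?_ ?_ i <;> simp [hmlt, hp])
          (fun i => by refine Fin.lastCases ?_ ?_ i <;> simp [hm', hq])
          (win_snoc_iff.mpr hw')).mp hsat
      · rintro ⟨m', hmpos', hmlt', hsat⟩
        rw [Fin.cons_zero] at hmlt'
        obtain ⟨m, hm, hw'⟩ := mv2 m' (by omega)
        rw [hlen1] at hm
        refine ⟨m, pos_ofList (by omega), by rw [Fin.cons_zero]; exact hm, ?_⟩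
        rw [← Fin.cons_snoc_eq_snoc_cons] at hsat ⊢
        exact (pfm_transfer hb hb' hl φ r' (by omega) (Fin.snoc p m) (Fin.snoc q m')
          (fun i => by refine Fin.lastCases ?_ ?_ i <;> simp [hm, hp])
          (fun i => by refine Fin.lastCases ?_ ?_ i <;> simp [hmlt', hq])
          (win_snoc_iff.mpr hw')).mpr hsat

/-- The prefFO game relation on words. -/
def prefWin (k : ℕ) (x y : List A) : Prop :=
  (∀ m, m < x.length → ∃ m', m' < y.length ∧ x[m]? = y[m']? ∧
      WinN (x.take m) (y.take m') (k-1)) ∧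
  (∀ m', m' < y.length → ∃ m, m < x.length ∧ x[m]? = y[m']? ∧
      WinN (x.take m) (y.take m') (k-1))

lemma elim0_eq (p : Fin 0 → ℕ) : p = fun i => i.elim0 := by
  funext i
  exact i.elim0

/-- Sentence transfer along the prefFO game. -/
lemma prefWin_satEquiv {k : ℕ} {x y : List A} (h : prefWin k x y) :
    ∀ (s : PSen A), s.depth ≤ k → (PSen.Sat (Word.ofList x) s ↔ PSen.Sat (Word.ofList y) s)
  | .exB φ, hd => by
      rw [PSen.depth] at hd
      simp only [PSen.Sat]
      constructor
      · rintro ⟨m, hmpos, hsat⟩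
        rw [pos_ofList_iff] at hmpos
        obtain ⟨m', hm', hlet, hwin⟩ := h.1 m hmpos
        refine ⟨m', pos_ofList hm', ?_⟩
        have heq1 : (fun _ : Fin 1 => m) = Fin.cons m (fun i : Fin 0 => i.elim0) := by
          funext i
          refine Fin.cases ?_ ?_ i
          · simp
          · intro j; exact j.elim0
        have heq2 : (fun _ : Fin 1 => m') = Fin.cons m' (fun i : Fin 0 => i.elim0) := by
          funext i
          refine Fin.cases ?_ ?_ i
          · simp
          · intro j; exact j.elim0
        rw [heq1] at hsat
        rw [heq2]
        exact (pfm_transfer hmpos hm' hlet φ (k-1) (by omega) _ _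
          (fun i => i.elim0) (fun i => i.elim0) (hwin.to_win _ _)).mp hsat
      · rintro ⟨m', hmpos', hsat⟩
        rw [pos_ofList_iff] at hmpos'
        obtain ⟨m, hm, hlet, hwin⟩ := h.2 m' hmpos'
        refine ⟨m, pos_ofList hm, ?_⟩
        have heq1 : (fun _ : Fin 1 => m) = Fin.cons m (fun i : Fin 0 => i.elim0) := by
          funext i
          refine Fin.cases ?_ ?_ i
          · simp
          · intro j; exact j.elim0
        have heq2 : (fun _ : Fin 1 => m') = Fin.cons m' (fun i : Fin 0 => i.elim0) := by
          funext i
          refine Fin.cases ?_ ?_ i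
          · simp
          · intro j; exact j.elim0
        rw [heq2] at hsat
        rw [heq1]
        exact (pfm_transfer hm hmpos' hlet φ (k-1) (by omega) _ _
          (fun i => i.elim0) (fun i => i.elim0) (hwin.to_win _ _)).mpr hsat
  | .and s t, hd => by
      rw [PSen.depth, max_le_iff] at hd
      exact and_congr (prefWin_satEquiv h s hd.1) (prefWin_satEquiv h t hd.2)
  | .not s, hd => by
      rw [PSen.depth] at hd
      exact not_congr (prefWin_satEquiv h s hd)

lemma prefWin_tpEq {k : ℕ} {x y : List A} (h : prefWin k x y) :
    tp k (Word.ofList x) = tp k (Word.ofList y) := by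
  ext s
  simp only [tp, Set.mem_setOf_eq]
  constructor
  · rintro ⟨hd, hs⟩
    exact ⟨hd, (prefWin_satEquiv h s hd).mp hs⟩
  · rintro ⟨hd, hs⟩
    exact ⟨hd, (prefWin_satEquiv h s hd).mpr hs⟩

lemma tpEq_satEquiv {k : ℕ} {x y : List A} (h : tp k (Word.ofList x) = tp k (Word.ofList y)) :
    ∀ (s : PSen A), s.depth ≤ k → (PSen.Sat (Word.ofList x) s ↔ PSen.Sat (Word.ofList y) s) := by
  intro s hd
  have := Set.ext_iff.mp h s
  simp only [tp, Set.mem_setOf_eq] at this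
  constructor
  · intro hs
    exact (this.mp ⟨hd, hs⟩).2
  · intro hs
    exact (this.mpr ⟨hd, hs⟩).2

/-- From type equality to the prefFO game. -/
lemma tpEq_prefWin {k : ℕ} (hk : 1 ≤ k) {x y : List A}
    (h : tp k (Word.ofList x) = tp k (Word.ofList y)) : prefWin k x y := by
  have hs := tpEq_satEquiv h
  have hs' := tpEq_satEquiv h.symm
  constructor
  · intro m hm
    have ha : x[m]? = some (x[m]'hm) := List.getElem?_eq_getElem hm
    set a := x[m]'hm with hadef
    set s : PSen A := .exB (.and (.letter a 0) (hinP (x.take m) (k-1) (fun i : Fin 0 => i.elim0)))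
      with hsdef
    have hdepth : s.depth ≤ k := by
      rw [hsdef, PSen.depth, PFm.depth]
      have h1 : (PFm.letter a (0 : Fin 1)).depth = 0 := rfl
      have h2 := depth_hinP (x := x.take m) (k-1) (fun i : Fin 0 => i.elim0)
      rw [h1]
      omega
    have hxsat : PSen.Sat (Word.ofList x) s := by
      refine ⟨m, pos_ofList hm, ?_, ?_⟩
      · exact ha
      · have heq : (fun _ : Fin 1 => m) = Fin.cons m (fun i : Fin 0 => i.elim0) := by
          funext i
          refine Fin.cases ?_ ?_ i
          · simp
          · intro j; exact j.elim0
        rw [heq]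
        refine (hinP_iff (x.take m) x (k-1) _ _ m (by omega)
          (fun i => i.elim0) (fun i => i.elim0)).mpr ?_
        exact Win.refl _ _
    have hysat := (hs s hdepth).mp hxsat
    obtain ⟨m', hmpos', hlet', hsat'⟩ := hysat
    rw [pos_ofList_iff] at hmpos'
    have hlet'' : x[m]? = y[m']? := by
      rw [ha]
      exact hlet'.symm
    refine ⟨m', hmpos', hlet'', ?_⟩
    have heq : (fun _ : Fin 1 => m') = Fin.cons m' (fun i : Fin 0 => i.elim0) := by
      funext i
      refine Fin.cases ?_ ?_ i
      · simp
      · intro j; exact j.elim0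
    rw [heq] at hsat'
    have hw := (hinP_iff (x.take m) y (k-1) _ _ m' (by omega)
      (fun i => i.elim0) (fun i => i.elim0)).mp hsat'
    exact WinN.of_win hw
  · intro m' hm'
    have ha : y[m']? = some (y[m']'hm') := List.getElem?_eq_getElem hm'
    set a := y[m']'hm' with hadef
    set s : PSen A := .exB (.and (.letter a 0) (hinP (y.take m') (k-1) (fun i : Fin 0 => i.elim0)))
      with hsdef
    have hdepth : s.depth ≤ k := by
      rw [hsdef, PSen.depth, PFm.depth]
      have h1 : (PFm.letter a (0 : Fin 1)).depth = 0 := rfl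
      have h2 := depth_hinP (x := y.take m') (k-1) (fun i : Fin 0 => i.elim0)
      rw [h1]
      omega
    have hysat : PSen.Sat (Word.ofList y) s := by
      refine ⟨m', pos_ofList hm', ?_, ?_⟩
      · exact ha
      · have heq : (fun _ : Fin 1 => m') = Fin.cons m' (fun i : Fin 0 => i.elim0) := by
          funext i
          refine Fin.cases ?_ ?_ i
          · simp
          · intro j; exact j.elim0
        rw [heq]
        refine (hinP_iff (y.take m') y (k-1) _ _ m' (by omega)
          (fun i => i.elim0) (fun i => i.elim0)).mpr ?_
        exact Win.refl _ _
    have hxsat := (hs' s hdepth).mp hysat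
    obtain ⟨m, hmpos, hlet, hsat⟩ := hxsat
    rw [pos_ofList_iff] at hmpos
    have hlet'' : x[m]? = y[m']? := by
      rw [ha]
      exact hlet
    refine ⟨m, hmpos, hlet'', ?_⟩
    have heq : (fun _ : Fin 1 => m) = Fin.cons m (fun i : Fin 0 => i.elim0) := by
      funext i
      refine Fin.cases ?_ ?_ i
      · simp
      · intro j; exact j.elim0
    rw [heq] at hsat
    have hw := (hinP_iff (y.take m') x (k-1) _ _ m (by omega)
      (fun i => i.elim0) (fun i => i.elim0)).mp hsat
    exact WinN.of_win (Win.symm _ hw)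

end Transfer


end PrefSynth


namespace PrefSynth

/-- Let `k ≥ 1` and `τ ⪯ τ'` in `Types_k`. Then every finite
word `w` of type `τ` has an extension `w·w'` of type `τ'`. -/
theorem typeLe_extension {A : Type} [Finite A] (k : ℕ) (hk : 1 ≤ k)
    (τ τ' : Set (PSen A)) (hτ : τ ∈ WTypes A k) (hτ' : τ' ∈ WTypes A k)
    (hle : typeLe k τ τ') :
    ∀ w : List A, tp k (Word.ofList w) = τ →
      ∃ w' : List A, tp k (Word.ofList (w ++ w')) = τ' := by
  obtain ⟨u, v, hu, huv⟩ := hle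
  intro w hw
  have htp : tp k (Word.ofList w) = tp k (Word.ofList u) := by rw [hw, hu]
  have hWwu := tpEq_prefWin hk htp
  have hWuw := tpEq_prefWin hk htp.symm
  by_cases hwe : w = []
  · subst hwe
    have hu0 : u = [] := by
      cases u with
      | nil => rfl
      | cons c t =>
          obtain ⟨m', hm', _⟩ := hWuw.1 0 (by simp)
          simp at hm'
    subst hu0
    exact ⟨v, huv⟩
  · set w₀ := w.dropLast with hw₀
    set a := w.getLast hwe with hadef
    have hww : w₀ ++ [a] = w := List.dropLast_concat_getLast hwe
    have hlw : w.length = w₀.length + 1 := by rw [← hww]; simp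
    have hmw : w₀.length < w.length := by omega
    have hxm : w[w₀.length]? = some a := by
      rw [← hww]
      exact List.getElem?_concat_length
    have htakew : w.take w₀.length = w₀ := by
      rw [← hww, List.take_append_of_le_length le_rfl, List.take_length]
    obtain ⟨m', hm'u, hlet, hWpre0⟩ := hWwu.1 w₀.length hmw
    have hum' : u[m']? = some a := by rw [← hlet, hxm]
    rw [htakew] at hWpre0
    set z := u.drop (m' + 1) with hz
    have hz1 : u.take (m' + 1) = u.take m' ++ [a] := by
      rw [List.take_succ, hum']
      rfl
    have hu2 : u = (u.take m' ++ [a]) ++ z := by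
      conv_lhs => rw [← List.take_append_drop (m' + 1) u]
      rw [hz1]
    have hlu : u.length = m' + 1 + z.length := by
      conv_lhs => rw [hu2]
      simp only [List.length_append, List.length_take, List.length_cons, List.length_nil]
      omega
    refine ⟨z ++ v, ?_⟩
    suffices hfin : prefWin k (w ++ (z ++ v)) (u ++ v) by
      rw [prefWin_tpEq hfin]
      exact huv
    constructor
    · intro M hM
      rw [List.length_append, List.length_append] at hM
      by_cases hMw : M < w.length
      · obtain ⟨m'', hm'', hl2, hw2⟩ := hWwu.1 M hMw
        refine ⟨m'', by rw [List.length_append]; omega, ?_, ?_⟩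
        · rw [List.getElem?_append_left hMw, List.getElem?_append_left hm'']
          exact hl2
        · rw [List.take_append_of_le_length (le_of_lt hMw),
            List.take_append_of_le_length (le_of_lt hm'')]
          exact hw2
      · set j := M - w.length with hj
        by_cases hjz : j < z.length
        · refine ⟨m' + 1 + j, by rw [List.length_append]; omega, ?_, ?_⟩
          · have e1 : (w ++ (z ++ v))[M]? = z[j]? := by
              rw [List.getElem?_append_right (by omega : w.length ≤ M)]
              rw [show M - w.length = j from rfl, List.getElem?_append_left hjz]
            have e2 : z[j]? = u[m' + 1 + j]? := by
              rw [hz, List.getElem?_drop]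
            have e3 : (u ++ v)[m' + 1 + j]? = u[m' + 1 + j]? :=
              List.getElem?_append_left (by omega)
            rw [e1, e2, e3]
          · have hMj : M = w.length + j := by omega
            have p1 : (w ++ (z ++ v)).take M = w₀ ++ ([a] ++ z.take j) := by
              rw [hMj, List.take_length_add_append, List.take_append_of_le_length (le_of_lt hjz),
                ← hww, List.append_assoc]
            have p2 : (u ++ v).take (m' + 1 + j) = u.take m' ++ ([a] ++ z.take j) := by
              rw [List.take_append_of_le_length (by omega : m' + 1 + j ≤ u.length),
                List.take_add, hz1, ← hz, List.append_assoc]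
            rw [p1, p2]
            exact WinN.append _ hWpre0
        · set jj := j - z.length with hjj
          have hjv : jj < v.length := by omega
          refine ⟨u.length + jj, by rw [List.length_append]; omega, ?_, ?_⟩
          · have e1 : (w ++ (z ++ v))[M]? = v[jj]? := by
              rw [List.getElem?_append_right (by omega : w.length ≤ M),
                List.getElem?_append_right (by omega : z.length ≤ M - w.length)]
              all_goals first
              | rfl
              | (congr 1 <;> omega)
            have e2 : (u ++ v)[u.length + jj]? = v[jj]? := by
              rw [List.getElem?_append_right (Nat.le_add_right _ _)]
              all_goals first
              | rfl
              | (congr 1 <;> omega)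
            rw [e1, e2]
          · have hMj : M = w.length + (z.length + jj) := by omega
            have p1 : (w ++ (z ++ v)).take M = w₀ ++ ([a] ++ (z ++ v.take jj)) := by
              rw [hMj, List.take_length_add_append, List.take_length_add_append, ← hww, List.append_assoc]
            have p2 : (u ++ v).take (u.length + jj) = u.take m' ++ ([a] ++ (z ++ v.take jj)) := by
              rw [List.take_length_add_append]
              conv_lhs => rw [hu2]
              rw [List.append_assoc, List.append_assoc]
            rw [p1, p2]
            exact WinN.append _ hWpre0
    · intro M' hM'
      rw [List.length_append] at hM'
      by_cases hMu : M' < u.length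
      · obtain ⟨M, hM, hl2, hw2⟩ := hWuw.1 M' hMu
        refine ⟨M, by rw [List.length_append, List.length_append]; omega, ?_, ?_⟩
        · rw [List.getElem?_append_left hM, List.getElem?_append_left hMu]
          exact hl2.symm
        · rw [List.take_append_of_le_length (le_of_lt hM),
            List.take_append_of_le_length (le_of_lt hMu)]
          exact WinN.symm hw2
      · set jj := M' - u.length with hjj
        have hjv : jj < v.length := by omega
        refine ⟨w.length + z.length + jj, ?_, ?_, ?_⟩
        · rw [List.length_append, List.length_append]
          omega
        · have e1 : (w ++ (z ++ v))[w.length + z.length + jj]? = v[jj]? := by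
            rw [List.getElem?_append_right (by omega : w.length ≤ w.length + z.length + jj),
              List.getElem?_append_right (by omega : z.length ≤ w.length + z.length + jj - w.length)]
            all_goals first
            | rfl
            | (congr 1 <;> omega)
          have e2 : (u ++ v)[M']? = v[jj]? := by
            rw [List.getElem?_append_right (by omega : u.length ≤ M')]
          rw [e1, e2]
        · have hMj : w.length + z.length + jj = w.length + (z.length + jj) := by omega
          have p1 : (w ++ (z ++ v)).take (w.length + z.length + jj) =
              w₀ ++ ([a] ++ (z ++ v.take jj)) := by
            rw [hMj, List.take_length_add_append, List.take_length_add_append, ← hww, List.append_assoc]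
          have p2 : (u ++ v).take M' = u.take m' ++ ([a] ++ (z ++ v.take jj)) := by
            rw [show M' = u.length + jj by omega, List.take_length_add_append]
            conv_lhs => rw [hu2]
            rw [List.append_assoc, List.append_assoc]
          rw [p1, p2]
          exact WinN.append _ hWpre0


end PrefSynth
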